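/- Let (A, μ, α, B) be a quadratic Hom-Novikov superalgebra with α an automorphism. Then (A, μ, α) is Hom-associative: α(x)(yz) = (xy)α(z) for all homogeneous x, y, z. -/

import Mathlib

private lemma neg_one_pow_congr' {𝕜 : Type*} [Ring 𝕜] (m n : ℕ) (h : m % 2 = n % 2) :
    ((-1 : 𝕜) ^ m = (-1) ^ n) := by
  conv_lhs => rw [← Nat.div_add_mod m 2]
  conv_rhs => rw [← Nat.div_add_mod n 2]
  rw [h, pow_add, pow_add, pow_mul, pow_mul, neg_one_sq, one_pow, one_pow]

private lemma par_tp : ∀ p q r s : ZMod 2,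
    ((p + q).val * (r + s).val) % 2
      = (p.val * r.val + p.val * s.val + q.val * r.val + q.val * s.val) % 2 := by decide

private lemma par_g : ∀ p q r s : ZMod 2,
    (r.val * s.val + p.val * ((q + s) + r).val
      + (q.val * r.val + q.val * p.val + s.val * r.val + s.val * p.val)) % 2
      = (r.val * p.val + r.val * q.val) % 2 := by decide

theorem stmt10
    (𝕜 A : Type*) [Field 𝕜] [AddCommGroup A] [Module 𝕜 A]
    (G : ZMod 2 → Submodule 𝕜 A) (hG : DirectSum.IsInternal G)
    (mul : A →ₗ[𝕜] A →ₗ[𝕜] A) (α : A →ₗ[𝕜] A)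
    (hmul_even : ∀ i j : ZMod 2, ∀ x ∈ G i, ∀ y ∈ G j, mul x y ∈ G (i + j))
    (hα_even : ∀ i : ZMod 2, ∀ x ∈ G i, α x ∈ G i)
    (hα_mul : ∀ x y : A, α (mul x y) = mul (α x) (α y))
    (hls : ∀ i j k : ZMod 2, ∀ x ∈ G i, ∀ y ∈ G j, ∀ z ∈ G k,
      mul (mul x y) (α z) - mul (α x) (mul y z)
        = ((-1 : 𝕜) ^ (i.val * j.val)) • (mul (mul y x) (α z) - mul (α y) (mul x z)))
    (hrn : ∀ i j k : ZMod 2, ∀ x ∈ G i, ∀ y ∈ G j, ∀ z ∈ G k,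
      mul (mul x y) (α z) = ((-1 : 𝕜) ^ (j.val * k.val)) • mul (mul x z) (α y))
    (B : A →ₗ[𝕜] A →ₗ[𝕜] 𝕜)
    (hB_even : ∀ i j : ZMod 2, i ≠ j → ∀ x ∈ G i, ∀ y ∈ G j, B x y = 0)
    (hB_sym : ∀ i j : ZMod 2, ∀ x ∈ G i, ∀ y ∈ G j,
      B x y = ((-1 : 𝕜) ^ (i.val * j.val)) * B y x)
    (hB_nd : ∀ x : A, (∀ y : A, B x y = 0) → x = 0)
    (hB_inv : ∀ x y z : A, B (α x) (mul y z) = B (mul x y) (α z))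
    (hα_bij : Function.Bijective α) :
    ∀ i j k : ZMod 2, ∀ x ∈ G i, ∀ y ∈ G j, ∀ z ∈ G k,
      mul (α x) (mul y z) = mul (mul x y) (α z) := by
  intro i j k x hx y hy z hz
  -- (R) : right-commutativity inside B, first argument
  have hF_rc : ∀ (p q r : ZMod 2) (a b c : A), a ∈ G p → b ∈ G q → c ∈ G r → ∀ v : A,
      B (mul (mul a b) (α c)) v
        = (-1 : 𝕜) ^ (q.val * r.val) * B (mul (mul a c) (α b)) v := by
    intro p q r a b c ha hb hc v
    rw [hrn p q r a ha b hb c hc]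
    simp [smul_eq_mul]
  -- (T) : pair swap
  have hF_tp : ∀ (p q r s : ZMod 2) (a b c d : A),
      a ∈ G p → b ∈ G q → c ∈ G r → d ∈ G s →
      B (mul (mul a b) (α c)) (α (α d))
        = (-1 : 𝕜) ^ (p.val * r.val + p.val * s.val + q.val * r.val + q.val * s.val)
          * B (mul (mul c d) (α a)) (α (α b)) := by
    intro p q r s a b c d ha hb hc hd
    have h1 : B (mul (mul a b) (α c)) (α (α d)) = B (α (mul a b)) (mul (α c) (α d)) :=
      (hB_inv (mul a b) (α c) (α d)).symm
    rw [h1, ← hα_mul c d,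
      hB_sym (p + q) (r + s) (α (mul a b)) (hα_even _ _ (hmul_even p q a ha b hb))
        (α (mul c d)) (hα_even _ _ (hmul_even r s c hc d hd)),
      hα_mul a b, hB_inv (mul c d) (α a) (α b),
      neg_one_pow_congr' _ _ (par_tp p q r s)]
  -- (G-rule) : convert the "associated" term
  have hG_eq : ∀ (p q r s : ZMod 2) (a b c d : A),
      a ∈ G p → b ∈ G q → c ∈ G r → d ∈ G s →
      B (mul (α a) (mul b c)) (α (α d))
        = (-1 : 𝕜) ^ (r.val * p.val + r.val * q.val)
          * B (mul (mul c a) (α b)) (α (α d)) := by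
    intro p q r s a b c d ha hb hc hd
    have h1 : B (mul (α a) (mul b c)) (α (α d)) = B (α (α a)) (mul (mul b c) (α d)) :=
      (hB_inv (α a) (mul b c) (α d)).symm
    rw [h1, hrn q r s b hb c hc d hd]
    rw [map_smul, smul_eq_mul]
    rw [hB_sym p ((q + s) + r) (α (α a)) (hα_even _ _ (hα_even _ _ ha))
      (mul (mul b d) (α c))
      (hmul_even (q + s) r (mul b d) (hmul_even q s b hb d hd) (α c) (hα_even _ _ hc))]
    rw [hF_tp q s r p b d c a hb hd hc ha]
    rw [← mul_assoc, ← mul_assoc, ← pow_add, ← pow_add]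
    rw [neg_one_pow_congr' _ _ (par_g p q r s)]
  -- (Swap) : supersymmetry of F in the first two slots
  have hF_sw : ∀ (p q r s : ZMod 2) (a b c d : A),
      a ∈ G p → b ∈ G q → c ∈ G r → d ∈ G s →
      B (mul (mul a b) (α c)) (α (α d))
        = (-1 : 𝕜) ^ (p.val * q.val) * B (mul (mul b a) (α c)) (α (α d)) := by
    intro p q r s a b c d ha hb hc hd
    have hLS := hls p q r a ha b hb c hc
    have h1 : B (mul (mul a b) (α c)) (α (α d)) - B (mul (α a) (mul b c)) (α (α d))
        = (-1 : 𝕜) ^ (p.val * q.val)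
          * (B (mul (mul b a) (α c)) (α (α d)) - B (mul (α b) (mul a c)) (α (α d))) := by
      have := congrArg (fun t => B t (α (α d))) hLS
      simpa [map_sub, map_smul, smul_eq_mul, mul_sub] using this
    have h2 := hG_eq p q r s a b c d ha hb hc hd
    have h3 := hG_eq q p r s b a c d hb ha hc hd
    have h4 := hF_rc r p q c a b hc ha hb (α (α d))
    linear_combination h1 + h2 - ((-1 : 𝕜) ^ (p.val * q.val)) * h3
      + ((-1 : 𝕜) ^ (r.val * p.val + r.val * q.val)) * h4
  -- key homogeneous identity
  have key : ∀ (l : ZMod 2), ∀ w ∈ G l,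
      B (mul (α x) (mul y z)) (α (α w)) = B (mul (mul x y) (α z)) (α (α w)) := by
    intro l w hw
    have h1 := hG_eq i j k l x y z w hx hy hz hw
    have h2 := hF_sw k i j l z x y w hz hx hy hw
    have h3 := hF_rc i k j x z y hx hz hy (α (α w))
    have hsq : (-1 : 𝕜) ^ (2 * (k.val * i.val + k.val * j.val)) = 1 := by
      rw [pow_mul, neg_one_sq, one_pow]
    linear_combination h1 + ((-1 : 𝕜) ^ (k.val * i.val + k.val * j.val)) * h2
      + ((-1 : 𝕜) ^ (k.val * i.val + k.val * j.val + k.val * i.val)) * h3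
      + (B (mul (mul x y) (α z)) (α (α w))) * hsq
  -- nondegeneracy
  have hzero : mul (α x) (mul y z) - mul (mul x y) (α z) = 0 := by
    apply hB_nd
    intro v
    obtain ⟨v1, rfl⟩ := hα_bij.2 v
    obtain ⟨u, rfl⟩ := hα_bij.2 v1
    have hu : u ∈ ⨆ l, G l := by
      rw [hG.submodule_iSup_eq_top]; trivial
    refine Submodule.iSup_induction (motive := fun u =>
        B (mul (α x) (mul y z) - mul (mul x y) (α z)) (α (α u)) = 0) G hu ?_ ?_ ?_
    · intro l w hw
      simp only [map_sub, LinearMap.sub_apply]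
      rw [key l w hw, sub_self]
    · simp
    · intro a b hha hhb
      simp only [map_add]
      rw [hha, hhb, add_zero]
  have := sub_eq_zero.mp hzero
  exact this
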